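/- Let Y be a finite-dimensional real inner product space, (Ω, ℱ, P) a probability space, and h : Y → ℝ a differentiable function that is μ-strongly convex (i.e., y ↦ h(y) − (μ/2)‖y‖² is convex, μ > 0) and whose gradient ∇h is L-Lipschitz (μ ≤ L). Let y* ∈ Y satisfy ∇h(y*) = 0 and let 0 < β ≤ 1/L. Fix y ∈ Y and let G : Ω → Y be an integrable random vector with 𝔼[G] = ∇h(y) and 𝔼[‖G − ∇h(y)‖²] ≤ σ². Then 𝔼[‖y − βG − y*‖²] ≤ (1 − μβ)‖y − y*‖² + β²σ². -/

import Mathlib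

open MeasureTheory

section Aux

open Set InnerProductSpace

variable {Y : Type*} [NormedAddCommGroup Y] [InnerProductSpace ℝ Y] [CompleteSpace Y]

local notation "⟪" x ", " y "⟫" => @inner ℝ _ _ x y

/-- Derivative of `f` along the segment from `a` to `b`. -/
lemma sgd_line_hasDerivAt {f : Y → ℝ} {gf : Y → Y} (hgrad : ∀ z, HasGradientAt f (gf z) z)
    (a b : Y) (t : ℝ) :
    HasDerivAt (fun s : ℝ => f (s • (b - a) + a)) ⟪gf (t • (b - a) + a), b - a⟫ t := by
  have hc : HasDerivAt (fun s : ℝ => s • (b - a) + a) (b - a) t := by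
    simpa using ((hasDerivAt_id t).smul_const (b - a)).add_const a
  have hf := (hgrad (t • (b - a) + a)).hasFDerivAt
  have := hf.comp_hasDerivAt t hc
  simpa [InnerProductSpace.toDual_apply_apply, Function.comp_def] using this

/-- Tangent-line inequality for a convex differentiable function. -/
lemma sgd_tangent {f : Y → ℝ} {gf : Y → Y} (hgrad : ∀ z, HasGradientAt f (gf z) z)
    (hconv : ConvexOn ℝ Set.univ f) (a b : Y) :
    f a + ⟪gf a, b - a⟫ ≤ f b := by
  have hφconv : ConvexOn ℝ Set.univ (fun s : ℝ => f (s • (b - a) + a)) := by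
    have := hconv.comp_affineMap (AffineMap.lineMap a b : ℝ →ᵃ[ℝ] Y)
    simpa [Function.comp_def, AffineMap.lineMap_apply, Set.preimage_univ] using this
  have hd := sgd_line_hasDerivAt hgrad a b 0
  have hslope := hφconv.le_slope_of_hasDerivAt (Set.mem_univ (0:ℝ)) (Set.mem_univ (1:ℝ))
    one_pos (by simpa using hd)
  rw [slope_def_field] at hslope
  simp only [zero_smul, zero_add, one_smul, sub_add_cancel] at hslope
  have h1 : (1:ℝ) - 0 = 1 := by norm_num
  rw [h1, div_one] at hslope
  linarith

/-- Descent lemma for an `L`-Lipschitz gradient. -/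
lemma sgd_descent {f : Y → ℝ} {gf : Y → Y} {L : ℝ} (hL : 0 < L)
    (hgrad : ∀ z, HasGradientAt f (gf z) z)
    (hLip : ∀ p q : Y, ‖gf p - gf q‖ ≤ L * ‖p - q‖) (a b : Y) :
    f b ≤ f a + ⟪gf a, b - a⟫ + L / 2 * ‖b - a‖ ^ 2 := by
  set ψ : ℝ → ℝ := fun t =>
    f (t • (b - a) + a) - t * ⟪gf a, b - a⟫ - t ^ 2 * (L / 2 * ‖b - a‖ ^ 2) with hψdef
  have hψd : ∀ t : ℝ, HasDerivAt ψ
      (⟪gf (t • (b - a) + a), b - a⟫ - ⟪gf a, b - a⟫ - 2 * t * (L / 2 * ‖b - a‖ ^ 2)) t := by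
    intro t
    have h1 := sgd_line_hasDerivAt hgrad a b t
    have h2 : HasDerivAt (fun s : ℝ => s * ⟪gf a, b - a⟫) ⟪gf a, b - a⟫ t := by
      simpa using (hasDerivAt_id t).mul_const ⟪gf a, b - a⟫
    have h3 : HasDerivAt (fun s : ℝ => s ^ 2 * (L / 2 * ‖b - a‖ ^ 2))
        (2 * t * (L / 2 * ‖b - a‖ ^ 2)) t := by
      have := (hasDerivAt_pow 2 t).mul_const (L / 2 * ‖b - a‖ ^ 2)
      refine this.congr_deriv ?_
      push_cast; ring
    exact (h1.sub h2).sub h3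
  have hanti : AntitoneOn ψ (Set.Icc (0:ℝ) 1) := by
    apply antitoneOn_of_deriv_nonpos (convex_Icc 0 1)
    · exact Continuous.continuousOn (by
        exact continuous_iff_continuousAt.2 fun t => (hψd t).continuousAt)
    · intro t ht
      exact (hψd t).differentiableAt.differentiableWithinAt
    · intro t ht
      rw [interior_Icc] at ht
      rw [(hψd t).deriv]
      have hCS : ⟪gf (t • (b - a) + a) - gf a, b - a⟫ ≤
          ‖gf (t • (b - a) + a) - gf a‖ * ‖b - a‖ := real_inner_le_norm _ _
      have hlip : ‖gf (t • (b - a) + a) - gf a‖ ≤ L * (t * ‖b - a‖) := by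
        have := hLip (t • (b - a) + a) a
        simpa [norm_smul, abs_of_pos ht.1] using this
      have hnn : (0:ℝ) ≤ ‖b - a‖ := norm_nonneg _
      have := hCS.trans (by nlinarith [hnn] :
        ‖gf (t • (b - a) + a) - gf a‖ * ‖b - a‖ ≤ L * t * ‖b - a‖ ^ 2)
      rw [inner_sub_left] at this
      nlinarith
  have h01 := hanti (Set.mem_Icc.2 ⟨le_refl 0, zero_le_one⟩)
    (Set.mem_Icc.2 ⟨zero_le_one, le_refl 1⟩) zero_le_one
  simp only [hψdef, zero_smul, zero_add, one_smul, sub_add_cancel, one_pow, one_mul,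
    zero_pow, zero_mul, sub_zero, mul_zero] at h01
  linarith [h01]

/-- For a convex function with `L`-Lipschitz gradient and minimizer `m`,
`f m + ‖∇f w‖²/(2L) ≤ f w`. -/
lemma sgd_gap {f : Y → ℝ} {gf : Y → Y} {L : ℝ} (hL : 0 < L)
    (hgrad : ∀ z, HasGradientAt f (gf z) z) (hconv : ConvexOn ℝ Set.univ f)
    (hLip : ∀ p q : Y, ‖gf p - gf q‖ ≤ L * ‖p - q‖) {m : Y} (hm : gf m = 0) (w : Y) :
    f m + 1 / (2 * L) * ‖gf w‖ ^ 2 ≤ f w := by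
  have h1 : f m ≤ f (w - (1 / L) • gf w) := by
    have := sgd_tangent hgrad hconv m (w - (1 / L) • gf w)
    simpa [hm] using this
  have h2 := sgd_descent hL hgrad hLip w (w - (1 / L) • gf w)
  have he : w - (1 / L) • gf w - w = -((1 / L) • gf w) := by abel
  rw [he] at h2
  have hi : ⟪gf w, -((1 / L) • gf w)⟫ = -(1 / L) * ‖gf w‖ ^ 2 := by
    rw [inner_neg_right, real_inner_smul_right, real_inner_self_eq_norm_sq]; ring
  have hn : ‖-((1 / L) • gf w)‖ ^ 2 = (1 / L) ^ 2 * ‖gf w‖ ^ 2 := by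
    rw [norm_neg, norm_smul]
    rw [Real.norm_eq_abs, abs_of_pos (by positivity : (0:ℝ) < 1 / L)]
    ring
  rw [hi, hn] at h2
  have hL' : L ≠ 0 := ne_of_gt hL
  have : f (w - (1 / L) • gf w) ≤ f w - 1 / (2 * L) * ‖gf w‖ ^ 2 := by
    have : L / 2 * ((1 / L) ^ 2 * ‖gf w‖ ^ 2) = 1 / (2 * L) * ‖gf w‖ ^ 2 := by
      field_simp
    have hhalf : 1 / L * ‖gf w‖ ^ 2 = 2 * (1 / (2 * L) * ‖gf w‖ ^ 2) := by
      field_simp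
    linarith
  linarith

/-- Cocoercivity at a critical point. -/
lemma sgd_coco {f : Y → ℝ} {gf : Y → Y} {L : ℝ} (hL : 0 < L)
    (hgrad : ∀ z, HasGradientAt f (gf z) z) (hconv : ConvexOn ℝ Set.univ f)
    (hLip : ∀ p q : Y, ‖gf p - gf q‖ ≤ L * ‖p - q‖) {m : Y} (hm : gf m = 0) (w : Y) :
    1 / L * ‖gf w‖ ^ 2 ≤ ⟪gf w, w - m⟫ := by
  set g := gf w with hg
  have hA := sgd_gap hL hgrad hconv hLip hm w
  -- second function: f₂ z = f z - ⟪g, z⟫, minimized at w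
  set f2 : Y → ℝ := fun z => f z - ⟪g, z⟫ with hf2
  set gf2 : Y → Y := fun z => gf z - g with hgf2
  have hgrad2 : ∀ z, HasGradientAt f2 (gf2 z) z := by
    intro z
    have h1 := (hgrad z).hasFDerivAt
    have h2 : HasFDerivAt (fun z : Y => ⟪g, z⟫) (InnerProductSpace.toDual ℝ Y g) z :=
      (InnerProductSpace.toDual ℝ Y g).hasFDerivAt
    have := h1.sub h2
    rw [hasGradientAt_iff_hasFDerivAt]
    refine this.congr_fderiv ?_
    simp [hgf2, map_sub]
  have hconv2 : ConvexOn ℝ Set.univ f2 := by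
    refine ⟨convex_univ, ?_⟩
    intro x _ z _ a b ha hb hab
    have := hconv.2 (Set.mem_univ x) (Set.mem_univ z) ha hb hab
    simp only [hf2, smul_eq_mul]
    have hin : ⟪g, a • x + b • z⟫ = a * ⟪g, x⟫ + b * ⟪g, z⟫ := by
      rw [inner_add_right, real_inner_smul_right, real_inner_smul_right]
    rw [hin]
    simp only [smul_eq_mul] at this
    linarith
  have hLip2 : ∀ p q : Y, ‖gf2 p - gf2 q‖ ≤ L * ‖p - q‖ := by
    intro p q
    have : gf2 p - gf2 q = gf p - gf q := by simp [hgf2]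
    rw [this]; exact hLip p q
  have hm2 : gf2 w = 0 := by simp [hgf2, hg]
  have hB := sgd_gap hL hgrad2 hconv2 hLip2 hm2 m
  have hgm2 : gf2 m = -g := by simp [hgf2, hm]
  rw [hgm2, norm_neg] at hB
  simp only [hf2] at hB
  have hsum : 2 * (1 / (2 * L)) * ‖g‖ ^ 2 ≤ ⟪g, w⟫ - ⟪g, m⟫ := by linarith
  have : ⟪g, w - m⟫ = ⟪g, w⟫ - ⟪g, m⟫ := inner_sub_right _ _ _
  rw [this]
  have hL' : L ≠ 0 := ne_of_gt hL
  have h2L : 2 * (1 / (2 * L)) = 1 / L := by field_simp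
  rw [h2L] at hsum
  exact hsum

/-- Strong monotonicity of the gradient of a `μ`-strongly convex function. -/
lemma sgd_strong {f : Y → ℝ} {gf : Y → Y} {μ : ℝ}
    (hgrad : ∀ z, HasGradientAt f (gf z) z)
    (hconv : ConvexOn ℝ Set.univ (fun y : Y => f y - μ / 2 * ‖y‖ ^ 2)) (a b : Y) :
    ⟪gf a, b - a⟫ + μ * ‖b - a‖ ^ 2 ≤ ⟪gf b, b - a⟫ := by
  have hq : ∀ t : ℝ, μ / 2 * ‖t • (b - a) + a‖ ^ 2 =
      μ / 2 * ‖a‖ ^ 2 + t * (μ * ⟪b - a, a⟫) + t ^ 2 * (μ / 2 * ‖b - a‖ ^ 2) := by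
    intro t
    rw [norm_add_sq_real, real_inner_smul_left, norm_smul, Real.norm_eq_abs, mul_pow, sq_abs]
    ring
  set d : ℝ → ℝ := fun t => f (t • (b - a) + a) - μ / 2 * ‖t • (b - a) + a‖ ^ 2 with hddef
  have hdconv : ConvexOn ℝ Set.univ d := by
    have := hconv.comp_affineMap (AffineMap.lineMap a b : ℝ →ᵃ[ℝ] Y)
    simpa [hddef, Function.comp_def, AffineMap.lineMap_apply, Set.preimage_univ] using this
  have hdd : ∀ t : ℝ, HasDerivAt d
      (⟪gf (t • (b - a) + a), b - a⟫ - (μ * ⟪b - a, a⟫ + 2 * t * (μ / 2 * ‖b - a‖ ^ 2))) t := by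
    intro t
    have h1 := sgd_line_hasDerivAt hgrad a b t
    have h2 : HasDerivAt (fun s : ℝ => μ / 2 * ‖s • (b - a) + a‖ ^ 2)
        (μ * ⟪b - a, a⟫ + 2 * t * (μ / 2 * ‖b - a‖ ^ 2)) t := by
      have hpoly : HasDerivAt (fun s : ℝ =>
          μ / 2 * ‖a‖ ^ 2 + s * (μ * ⟪b - a, a⟫) + s ^ 2 * (μ / 2 * ‖b - a‖ ^ 2))
          (μ * ⟪b - a, a⟫ + 2 * t * (μ / 2 * ‖b - a‖ ^ 2)) t := by
        have ha : HasDerivAt (fun s : ℝ => μ / 2 * ‖a‖ ^ 2 + s * (μ * ⟪b - a, a⟫))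
            (μ * ⟪b - a, a⟫) t := by
          simpa using ((hasDerivAt_id t).mul_const (μ * ⟪b - a, a⟫)).const_add
            (μ / 2 * ‖a‖ ^ 2)
        have hb : HasDerivAt (fun s : ℝ => s ^ 2 * (μ / 2 * ‖b - a‖ ^ 2))
            (2 * t * (μ / 2 * ‖b - a‖ ^ 2)) t := by
          have := (hasDerivAt_pow 2 t).mul_const (μ / 2 * ‖b - a‖ ^ 2)
          refine this.congr_deriv ?_
          push_cast; ring
        exact ha.add hb
      have : (fun s : ℝ => μ / 2 * ‖s • (b - a) + a‖ ^ 2) = fun s : ℝ =>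
          μ / 2 * ‖a‖ ^ 2 + s * (μ * ⟪b - a, a⟫) + s ^ 2 * (μ / 2 * ‖b - a‖ ^ 2) :=
        funext hq
      rw [this]
      exact hpoly
    exact h1.sub h2
  have hs1 := hdconv.le_slope_of_hasDerivAt (Set.mem_univ (0:ℝ)) (Set.mem_univ (1:ℝ))
    one_pos (hdd 0)
  have hs2 := hdconv.slope_le_of_hasDerivAt (Set.mem_univ (0:ℝ)) (Set.mem_univ (1:ℝ))
    one_pos (hdd 1)
  have hchain := hs1.trans hs2
  simp only [zero_smul, zero_add, one_smul, sub_add_cancel, mul_zero, mul_one] at hchain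
  nlinarith [hchain]

end Aux


/-- One-step stochastic gradient descent inequality (eq. 12eq in the proof of Lemma B.2):
a single SGD step with an unbiased gradient estimator of variance at most `σ²` contracts
the expected squared distance to the minimizer up to an additive variance term. -/
theorem stmt_17
    {Y : Type*} [NormedAddCommGroup Y] [InnerProductSpace ℝ Y] [FiniteDimensional ℝ Y]
    {Ω : Type*} [MeasurableSpace Ω] (P : Measure Ω) [IsProbabilityMeasure P]
    (h : Y → ℝ) (gradh : Y → Y) (μ L β σ : ℝ) (hμ : 0 < μ) (hμL : μ ≤ L)
    (hgrad : ∀ y : Y, HasGradientAt h (gradh y) y)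
    (hconv : ConvexOn ℝ Set.univ (fun y : Y => h y - μ / 2 * ‖y‖ ^ 2))
    (hLip : ∀ a b : Y, ‖gradh a - gradh b‖ ≤ L * ‖a - b‖)
    (ystar : Y) (hstar : gradh ystar = 0)
    (hβ : 0 < β) (hβle : β ≤ 1 / L)
    (y : Y) (G : Ω → Y)
    (hGint : Integrable G P)
    (hmean : ∫ ω, G ω ∂P = gradh y)
    (hvarint : Integrable (fun ω => ‖G ω - gradh y‖ ^ 2) P)
    (hvar : ∫ ω, ‖G ω - gradh y‖ ^ 2 ∂P ≤ σ ^ 2) :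
    ∫ ω, ‖y - β • G ω - ystar‖ ^ 2 ∂P ≤ (1 - μ * β) * ‖y - ystar‖ ^ 2 + β ^ 2 * σ ^ 2 := by
  have hLpos : 0 < L := lt_of_lt_of_le hμ hμL
  -- convexity of h itself
  have hconvh : ConvexOn ℝ Set.univ h := by
    have hn2 : ConvexOn ℝ Set.univ (fun y : Y => ‖y‖ ^ 2) := by
      refine ⟨convex_univ, fun x _ z _ a b ha hb hab => ?_⟩
      simp only [smul_eq_mul]
      have h1 : ‖a • x + b • z‖ ≤ a * ‖x‖ + b * ‖z‖ := by
        calc ‖a • x + b • z‖ ≤ ‖a • x‖ + ‖b • z‖ := norm_add_le _ _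
          _ = a * ‖x‖ + b * ‖z‖ := by
            rw [norm_smul, norm_smul, Real.norm_eq_abs, Real.norm_eq_abs,
              abs_of_nonneg ha, abs_of_nonneg hb]
      have h2 : ‖a • x + b • z‖ ^ 2 ≤ (a * ‖x‖ + b * ‖z‖) ^ 2 :=
        pow_le_pow_left₀ (norm_nonneg _) h1 2
      nlinarith [sq_nonneg (‖x‖ - ‖z‖), mul_nonneg ha hb]
    have hs : ConvexOn ℝ Set.univ (fun y : Y => μ / 2 * ‖y‖ ^ 2) := by
      have := ConvexOn.smul (by positivity : (0:ℝ) ≤ μ / 2) hn2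
      simpa [smul_eq_mul] using this
    have hadd := hconv.add hs
    have heq : ((fun y : Y => h y - μ / 2 * ‖y‖ ^ 2) + fun y : Y => μ / 2 * ‖y‖ ^ 2) = h := by
      funext z; simp only [Pi.add_apply]; ring
    rwa [heq] at hadd
  set g : Y := gradh y with hg
  set dv : Y := y - ystar with hdv
  -- strong monotonicity
  have hstrong : μ * ‖dv‖ ^ 2 ≤ inner ℝ g dv := by
    have := sgd_strong hgrad hconv ystar y
    rw [hstar] at this
    simpa [hdv, hg, inner_zero_left] using this
  -- cocoercivity
  have hcoco : 1 / L * ‖g‖ ^ 2 ≤ inner ℝ g dv :=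
    sgd_coco hLpos hgrad hconvh hLip hstar y
  -- deterministic one-step contraction
  have hdet : ‖dv - β • g‖ ^ 2 ≤ (1 - μ * β) * ‖dv‖ ^ 2 := by
    rw [norm_sub_sq_real, real_inner_smul_right, norm_smul, Real.norm_eq_abs, mul_pow, sq_abs]
    have hb2 : β * ‖g‖ ^ 2 ≤ (1 / L) * ‖g‖ ^ 2 :=
      mul_le_mul_of_nonneg_right hβle (sq_nonneg _)
    have hb3 : β * (β * ‖g‖ ^ 2) ≤ β * inner ℝ g dv :=
      mul_le_mul_of_nonneg_left (hb2.trans hcoco) hβ.le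
    have hb4 : β * (μ * ‖dv‖ ^ 2) ≤ β * inner ℝ g dv :=
      mul_le_mul_of_nonneg_left hstrong hβ.le
    have hcomm : (inner ℝ dv g : ℝ) = inner ℝ g dv := real_inner_comm _ _
    nlinarith [hb3, hb4]
  -- expectation computation
  set a : Y := y - β • gradh y - ystar with ha
  have hav : a = dv - β • g := by rw [ha, hdv, hg]; abel
  have hrw : ∀ ω, ‖y - β • G ω - ystar‖ ^ 2 =
      ‖a‖ ^ 2 - 2 * β * inner ℝ a (G ω - gradh y) + β ^ 2 * ‖G ω - gradh y‖ ^ 2 := by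
    intro ω
    have hv : y - β • G ω - ystar = a - β • (G ω - gradh y) := by
      rw [ha, smul_sub]; abel
    rw [hv, norm_sub_sq_real, real_inner_smul_right, norm_smul, Real.norm_eq_abs, mul_pow,
      sq_abs]
    ring
  have hie : Integrable (fun ω => G ω - gradh y) P := hGint.sub (integrable_const _)
  have hinte : ∫ ω, (G ω - gradh y) ∂P = 0 := by
    rw [integral_sub hGint (integrable_const _), hmean]
    simp [hg]
  have hiinner : Integrable (fun ω => (inner ℝ a (G ω - gradh y) : ℝ)) P := hie.const_inner a
  have hI : ∫ ω, ‖y - β • G ω - ystar‖ ^ 2 ∂P =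
      ‖a‖ ^ 2 - 2 * β * (inner ℝ a (∫ ω, (G ω - gradh y) ∂P) : ℝ)
        + β ^ 2 * ∫ ω, ‖G ω - gradh y‖ ^ 2 ∂P := by
    rw [show (fun ω => ‖y - β • G ω - ystar‖ ^ 2) = fun ω =>
        ‖a‖ ^ 2 - 2 * β * inner ℝ a (G ω - gradh y) + β ^ 2 * ‖G ω - gradh y‖ ^ 2 from
      funext hrw]
    have hint1 : Integrable (fun ω => ‖a‖ ^ 2 - 2 * β * (inner ℝ a (G ω - gradh y) : ℝ)) P :=
      (integrable_const _).sub (hiinner.const_mul _)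
    have hint2 : Integrable (fun ω => β ^ 2 * ‖G ω - gradh y‖ ^ 2) P := hvarint.const_mul _
    rw [integral_add hint1 hint2,
      integral_sub (integrable_const _) (hiinner.const_mul _), integral_const,
      integral_const_mul, integral_const_mul, integral_inner hie]
    simp
  rw [hI, hinte, inner_zero_right]
  have hvb : β ^ 2 * ∫ ω, ‖G ω - gradh y‖ ^ 2 ∂P ≤ β ^ 2 * σ ^ 2 :=
    mul_le_mul_of_nonneg_left hvar (sq_nonneg β)
  have hA : ‖a‖ ^ 2 ≤ (1 - μ * β) * ‖dv‖ ^ 2 := by rw [hav]; exact hdet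
  have hdd : ‖dv‖ ^ 2 = ‖y - ystar‖ ^ 2 := by rw [hdv]
  linarith [hA, hvb, hdd.le, hdd.ge]
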